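/- Let N ≥ M ≥ 1 and σ > 0. Let V be an N × M complex matrix with V*V = N·I_M, let B be the M × M diagonal matrix with diagonal entries b_1,…,b_M ∈ ℂ, and let H̃ be the M × M diagonal matrix with diagonal entries η_1,…,η_M > 0. Then the matrix V B H̃ B* V* + σ² I_N is invertible and Tr( H̃ B* V* (V B H̃ B* V* + σ² I_N)^{−1} V B H̃ ) = Σ_{i=1}^M η_i ( 1 − (σ²/N) / (|b_i|² η_i + σ²/N) ). -/

import Mathlib

open Matrix

/-- Trace identity for the MMSE expression: if `VᴴV = N·I`, `B = diag(b)`,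
`H̃ = diag(η)` with `η_i > 0`, then `A = V B H̃ Bᴴ Vᴴ + σ²I` is invertible and
`Tr(H̃ Bᴴ Vᴴ A⁻¹ V B H̃) = ∑_i η_i (1 − (σ²/N)/(|b_i|² η_i + σ²/N))`. -/
theorem mmse_trace_identity
    (N M : ℕ) (hM : 1 ≤ M) (hNM : M ≤ N) (σ : ℝ) (hσ : 0 < σ)
    (V : Matrix (Fin N) (Fin M) ℂ)
    (hV : Vᴴ * V = (N : ℂ) • (1 : Matrix (Fin M) (Fin M) ℂ))
    (b : Fin M → ℂ) (η : Fin M → ℝ) (hη : ∀ i, 0 < η i)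
    (B H A : Matrix _ _ ℂ)
    (hB : B = Matrix.diagonal b)
    (hH : H = Matrix.diagonal fun i => (η i : ℂ))
    (hA : A = V * B * H * Bᴴ * Vᴴ + ((σ : ℂ) ^ 2) • (1 : Matrix (Fin N) (Fin N) ℂ)) :
    IsUnit A ∧
    (H * Bᴴ * Vᴴ * A⁻¹ * V * B * H).trace =
      ((∑ i, η i * (1 - (σ ^ 2 / N) / (‖b i‖ ^ 2 * η i + σ ^ 2 / N)) : ℝ) : ℂ) := by
  have hN : (0 : ℝ) < N := by exact_mod_cast lt_of_lt_of_le hM hNM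
  have hNne : (N : ℝ) ≠ 0 := hN.ne'
  set d : Fin M → ℝ := fun i => ‖b i‖ ^ 2 * η i with hd
  have hd0 : ∀ i, 0 ≤ d i := fun i => mul_nonneg (by positivity) (hη i).le
  have hden : ∀ i, (0 : ℝ) < N * d i + σ ^ 2 := fun i => by
    have := hd0 i; positivity
  set e : Fin M → ℝ := fun i => d i / (N * d i + σ ^ 2) with he
  set Dd : Matrix (Fin M) (Fin M) ℂ := Matrix.diagonal (fun i => (d i : ℂ)) with hDd
  set E : Matrix (Fin M) (Fin M) ℂ := Matrix.diagonal (fun i => (e i : ℂ)) with hE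
  have hbb : ∀ i, (starRingEnd ℂ) (b i) * (b i) = ((‖b i‖ ^ 2 : ℝ) : ℂ) := by
    intro i
    rw [mul_comm, Complex.mul_conj]
    push_cast [Complex.normSq_eq_norm_sq]
    ring
  have hD : B * H * Bᴴ = Dd := by
    rw [hB, hH, hDd, Matrix.diagonal_conjTranspose, Matrix.diagonal_mul_diagonal,
      Matrix.diagonal_mul_diagonal]
    refine congrArg Matrix.diagonal (funext fun i => ?_)
    simp only [Pi.star_apply, RCLike.star_def]
    rw [hd, Complex.ofReal_mul]
    linear_combination ((η i : ℂ)) * hbb i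
  have hA' : A = V * Dd * Vᴴ + ((σ : ℂ) ^ 2) • 1 := by
    rw [hA, ← hD]; simp only [Matrix.mul_assoc]
  set X : Matrix (Fin N) (Fin N) ℂ :=
    (((σ : ℂ) ^ 2)⁻¹) • (1 - V * E * Vᴴ) with hX
  have key : (N : ℂ) • (Dd * E) + ((σ : ℂ) ^ 2) • E = Dd := by
    rw [hDd, hE, Matrix.diagonal_mul_diagonal]
    ext i j
    rcases eq_or_ne i j with hij | hij
    · subst hij
      simp only [Matrix.add_apply, Matrix.smul_apply, Matrix.diagonal_apply_eq,
        smul_eq_mul, Pi.mul_apply]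
      have hC : ((N * d i + σ ^ 2 : ℝ) : ℂ) ≠ 0 := Complex.ofReal_ne_zero.mpr (hden i).ne'
      push_cast [he] at hC ⊢
      field_simp
    · simp [Matrix.diagonal_apply_ne _ hij, hij]
  have hmid : A * (V * E * Vᴴ) = V * Dd * Vᴴ := by
    rw [hA', add_mul, smul_mul_assoc, one_mul]
    have h1 : V * Dd * Vᴴ * (V * E * Vᴴ) = (N : ℂ) • (V * (Dd * E) * Vᴴ) := by
      rw [show V * Dd * Vᴴ * (V * E * Vᴴ) = V * Dd * (Vᴴ * V) * (E * Vᴴ) by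
        simp only [Matrix.mul_assoc], hV]
      simp only [Matrix.mul_smul, Matrix.smul_mul, Matrix.mul_one, Matrix.mul_assoc]
    rw [h1, show (N : ℂ) • (V * (Dd * E) * Vᴴ) + (σ : ℂ) ^ 2 • (V * E * Vᴴ)
        = V * ((N : ℂ) • (Dd * E) + ((σ : ℂ) ^ 2) • E) * Vᴴ by
      simp only [Matrix.mul_add, Matrix.add_mul, Matrix.mul_smul, Matrix.smul_mul], key]
  have hσ2 : ((σ : ℂ) ^ 2) ≠ 0 := by
    simpa using pow_ne_zero 2 (Complex.ofReal_ne_zero.mpr hσ.ne')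
  have hAX : A * X = 1 := by
    rw [hX, Matrix.mul_smul, Matrix.mul_sub, Matrix.mul_one, hmid, hA']
    rw [add_sub_cancel_left, smul_smul, inv_mul_cancel₀ hσ2, one_smul]
  have hUnit : IsUnit A := by
    have : IsUnit A.det := IsUnit.of_mul_eq_one X.det
      (by rw [← Matrix.det_mul, hAX, Matrix.det_one])
    exact (Matrix.isUnit_iff_isUnit_det A).mpr this
  have hAinv : A⁻¹ = X := Matrix.inv_eq_right_inv hAX
  refine ⟨hUnit, ?_⟩
  set G : Matrix (Fin M) (Fin M) ℂ :=
    Matrix.diagonal (fun i => ((N / (N * d i + σ ^ 2) : ℝ) : ℂ)) with hG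
  have h2 : Vᴴ * (V * E * Vᴴ) * V = (N : ℂ) • ((N : ℂ) • E) := by
    rw [show Vᴴ * (V * E * Vᴴ) * V = (Vᴴ * V) * (E * (Vᴴ * V)) by
      simp only [Matrix.mul_assoc], hV]
    simp only [Matrix.mul_smul, Matrix.smul_mul, Matrix.mul_one, Matrix.one_mul]
  have hVXV : Vᴴ * X * V = G := by
    rw [hX, Matrix.mul_smul, Matrix.smul_mul, Matrix.mul_sub, Matrix.sub_mul,
      Matrix.mul_one, h2, hV]
    rw [hG, hE]
    ext i j
    rcases eq_or_ne i j with hij | hij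
    · subst hij
      simp only [Matrix.smul_apply, Matrix.sub_apply, Matrix.one_apply_eq,
        Matrix.diagonal_apply_eq, smul_eq_mul]
      have hC : ((N * d i + σ ^ 2 : ℝ) : ℂ) ≠ 0 := Complex.ofReal_ne_zero.mpr (hden i).ne'
      have hσ2' : ((σ : ℂ)) ≠ 0 := Complex.ofReal_ne_zero.mpr hσ.ne'
      push_cast [he] at hC ⊢
      field_simp
      ring
    · simp [Matrix.diagonal_apply_ne _ hij, Matrix.one_apply_ne hij, hij]
  have hexpr : H * Bᴴ * Vᴴ * A⁻¹ * V * B * H = H * Bᴴ * (Vᴴ * X * V) * B * H := by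
    rw [hAinv]; simp only [Matrix.mul_assoc]
  rw [hexpr, hVXV, hB, hH, Matrix.diagonal_conjTranspose, hG]
  simp only [Matrix.diagonal_mul_diagonal]
  rw [Matrix.trace_diagonal, Complex.ofReal_sum]
  refine Finset.sum_congr rfl fun i _ => ?_
  simp only [Pi.star_apply, RCLike.star_def]
  have h := (hden i).ne'
  have hσ' : σ ≠ 0 := hσ.ne'
  have hden2 : ‖b i‖ ^ 2 * η i + σ ^ 2 / N ≠ 0 := by
    have h1 : (0:ℝ) ≤ ‖b i‖ ^ 2 * η i := mul_nonneg (by positivity) (hη i).le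
    have : (0:ℝ) < ‖b i‖ ^ 2 * η i + σ ^ 2 / N := by positivity
    exact this.ne'
  rw [show ((η i : ℂ)) * (starRingEnd ℂ) (b i) * ((N / (N * d i + σ ^ 2) : ℝ) : ℂ) * (b i)
        * ((η i : ℂ))
      = ((η i : ℂ)) * ((N / (N * d i + σ ^ 2) : ℝ) : ℂ) * ((starRingEnd ℂ) (b i) * (b i))
        * ((η i : ℂ)) by ring,
    hbb]
  have hreal : η i * (N / (N * d i + σ ^ 2)) * ‖b i‖ ^ 2 * η i
      = η i * (1 - σ ^ 2 / N / (‖b i‖ ^ 2 * η i + σ ^ 2 / N)) := by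
    have h3 : (0:ℝ) < η i * ↑N * ‖b i‖ ^ 2 + σ ^ 2 := by
      nlinarith [mul_nonneg (mul_nonneg (hη i).le hN.le) (sq_nonneg (‖b i‖)), sq_nonneg σ, hσ, pow_pos hσ 2]
    rw [hd]
    have h5 : ‖b i‖ ^ 2 * η i * ↑N + σ ^ 2 ≠ 0 := by
      rw [show ‖b i‖ ^ 2 * η i * (N:ℝ) + σ ^ 2
          = η i * ↑N * ‖b i‖ ^ 2 + σ ^ 2 by ring]
      exact h3.ne'
    have h6 : (N:ℝ) * (‖b i‖ ^ 2 * η i) + σ ^ 2 ≠ 0 := by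
      rw [show (N:ℝ) * (‖b i‖ ^ 2 * η i) + σ ^ 2
          = η i * ↑N * ‖b i‖ ^ 2 + σ ^ 2 by ring]
      exact h3.ne'
    field_simp [h3.ne']
    ring
  rw [← hreal]
  push_cast
  ring
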